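/- If det(I - A) ≠ 0, then there is a short exact sequence 0 → ℤ →^{ι̂_A} ℤ^N/(I-Â)ℤ^N →^{q̂_A} ℤ^N/(I-A)ℤ^N → 0, where q̂_A is the natural quotient map induced by the inclusion (I-Â)ℤ^N ⊆ (I-A)ℤ^N. -/

import Mathlib

/-- If det(I-A) ≠ 0, then 0 → ℤ →^{ι̂_A} ℤ^N/(I-Â)ℤ^N →^{q̂_A} ℤ^N/(I-A)ℤ^N → 0
is a short exact sequence. -/
theorem stmt9 (N : ℕ) (hN : 1 < N) (A : Matrix (Fin N) (Fin N) ℤ)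
    (hdet : (1 - A).det ≠ 0) :
    let R : Matrix (Fin N) (Fin N) ℤ := Matrix.of fun i _ => if (i : ℕ) = 0 then 1 else 0
    let Ahat := A + R - A * R
    let ι : ℤ → (Fin N → ℤ) ⧸ LinearMap.range (1 - Ahat).mulVecLin :=
      fun m => Submodule.Quotient.mk ((1 - A).mulVec (fun i => if (i : ℕ) = 0 then m else 0))
    ∀ q : ((Fin N → ℤ) ⧸ LinearMap.range (1 - Ahat).mulVecLin) →+
          ((Fin N → ℤ) ⧸ LinearMap.range (1 - A).mulVecLin),
      (∀ v : Fin N → ℤ, q (Submodule.Quotient.mk v) = Submodule.Quotient.mk v) →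
      Function.Injective ι ∧ Function.Surjective q ∧
        (∀ x, q x = 0 ↔ ∃ m : ℤ, x = ι m) := by
  intro R Ahat ι q hq
  haveI : NeZero N := ⟨by omega⟩
  -- the "delta" vector
  set δ : ℤ → Fin N → ℤ := fun m i => if (i : ℕ) = 0 then m else 0 with hδ
  have hc : ∀ i : Fin N, ((i : ℕ) = 0) = (i = 0) := fun i =>
    propext ⟨fun h => Fin.ext (by simp [h]), fun h => by simp [h]⟩
  have hδsum : ∀ m : ℤ, ∑ i, δ m i = m := by
    intro m
    simp only [hδ, hc]
    simp
  -- injectivity of (1-A)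
  have hinj : ∀ v w : Fin N → ℤ, (1 - A).mulVec v = (1 - A).mulVec w → v = w := by
    intro v w h
    have h0 : (1 - A).mulVec (v - w) = 0 := by
      rw [Matrix.mulVec_sub, h, sub_self]
    exact sub_eq_zero.mp (Matrix.eq_zero_of_mulVec_eq_zero hdet h0)
  -- factorization
  have hfac : (1 : Matrix (Fin N) (Fin N) ℤ) - Ahat = (1 - A) * (1 - R) := by
    show (1 : Matrix (Fin N) (Fin N) ℤ) - (A + R - A * R) = (1 - A) * (1 - R)
    noncomm_ring
  -- R.mulVec
  have hRmul : ∀ u : Fin N → ℤ, R.mulVec u = δ (∑ j, u j) := by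
    intro u
    funext i
    simp only [Matrix.mulVec, dotProduct, R, Matrix.of_apply, hδ]
    split_ifs with h <;> simp
  -- range of (1 - R)
  have hRrange : ∀ x : Fin N → ℤ, (∃ u, (1 - R).mulVec u = x) ↔ ∑ i, x i = 0 := by
    intro x
    constructor
    · rintro ⟨u, rfl⟩
      rw [Matrix.sub_mulVec, hRmul]
      simp only [Pi.sub_apply, Matrix.one_mulVec, Finset.sum_sub_distrib, hδsum, sub_self]
    · intro hsum
      refine ⟨fun i => if i = 0 then 0 else x i, ?_⟩
      have husum : ∑ j, (if j = 0 then 0 else x j) = - x 0 := by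
        have : ∀ j : Fin N, (if j = 0 then (0:ℤ) else x j) = x j - if j = 0 then x 0 else 0 := by
          intro j; split_ifs with h <;> simp [h]
        simp only [this, Finset.sum_sub_distrib, Finset.sum_ite_eq', Finset.mem_univ, if_true,
          hsum, zero_sub]
      funext i
      rw [Matrix.sub_mulVec, hRmul, husum]
      simp only [Pi.sub_apply, Matrix.one_mulVec, hδ]
      rcases eq_or_ne i 0 with h | h
      · simp [h]
      · have hi : (i : ℕ) ≠ 0 := fun hh => h (Fin.ext (by simp [hh]))
        simp [h, hi]
  -- description of range of (1 - Ahat)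
  have hkey : ∀ x : Fin N → ℤ,
      x ∈ LinearMap.range (1 - Ahat).mulVecLin ↔
        ∃ w : Fin N → ℤ, ∑ i, w i = 0 ∧ x = (1 - A).mulVec w := by
    intro x
    constructor
    · rintro ⟨u, rfl⟩
      refine ⟨(1 - R).mulVec u, (hRrange _).mp ⟨u, rfl⟩, ?_⟩
      simp only [Matrix.mulVecLin_apply, hfac, ← Matrix.mulVec_mulVec]
    · rintro ⟨w, hw, rfl⟩
      obtain ⟨u, hu⟩ := (hRrange w).mpr hw
      exact ⟨u, by simp only [Matrix.mulVecLin_apply, hfac, ← Matrix.mulVec_mulVec, hu]⟩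
  refine ⟨?_, ?_, ?_⟩
  · -- injectivity of ι
    intro m₁ m₂ h
    have h' : (1 - A).mulVec (δ m₁) - (1 - A).mulVec (δ m₂) ∈
        LinearMap.range (1 - Ahat).mulVecLin := by
      rw [← Submodule.Quotient.eq]
      exact h
    rw [← Matrix.mulVec_sub] at h'
    obtain ⟨w, hw, hweq⟩ := (hkey _).mp h'
    have : δ m₁ - δ m₂ = w := hinj _ _ hweq
    have hs : ∑ i, (δ m₁ - δ m₂) i = 0 := by rw [this, hw]
    simp only [Pi.sub_apply, Finset.sum_sub_distrib, hδsum] at hs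
    linarith
  · -- surjectivity of q
    intro y
    obtain ⟨v, rfl⟩ := Submodule.Quotient.mk_surjective _ y
    exact ⟨Submodule.Quotient.mk v, hq v⟩
  · -- kernel
    intro x
    obtain ⟨v, rfl⟩ := Submodule.Quotient.mk_surjective _ x
    rw [hq]
    constructor
    · intro h
      obtain ⟨w, hw⟩ := (Submodule.Quotient.mk_eq_zero _).mp h
      simp only [Matrix.mulVecLin_apply] at hw
      refine ⟨∑ j, w j, ?_⟩
      show _ = Submodule.Quotient.mk _
      rw [Submodule.Quotient.eq]
      rw [hkey]
      refine ⟨w - δ (∑ j, w j), ?_, ?_⟩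
      · simp only [Pi.sub_apply, Finset.sum_sub_distrib, hδsum, sub_self]
      · rw [Matrix.mulVec_sub, hw]
    · rintro ⟨m, hm⟩
      rw [← hq v, hm]
      show q (Submodule.Quotient.mk _) = 0
      rw [hq, Submodule.Quotient.mk_eq_zero]
      exact ⟨δ m, by simp [Matrix.mulVecLin_apply, hδ, Matrix.sub_mulVec]⟩
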